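/- Fix θ̄ ∈ ℝ. Assume: (i) for every x ∈ X and every i : Fin (K+1), θ ↦ h θ x i has derivative h'(x,i) at θ̄; write S'(x) := ∑_{i : Fin K} h'(x, i.castSucc) and e'(x) := − S'(x) / S θ̄ x (the derivative at θ̄ of θ ↦ E'_θ(x) := − log(S θ x)); (ii) 0 < Z'(θ) < ∞ for all θ in a neighborhood of θ̄, where Z'(θ) := ∫ S θ x dμ; (iii) x ↦ p x · log(p x) is integrable, x ↦ p x · log(S θ x) is integrable for θ near θ̄, and x ↦ S'(x), x ↦ p x · e'(x), x ↦ (S θ̄ x / Z'(θ̄)) · e'(x) are integrable; (iv) differentiation under the integral sign is valid: θ ↦ Z'(θ) has derivative ∫ S'(x) dμ at θ̄, θ ↦ ∫ p x · (− log(S θ x)) dμ has derivative ∫ p x · e'(x) dμ at θ̄, and θ ↦ ∫ (S θ̄ x / Z'(θ̄)) · (− log(S θ x)) dμ has derivative ∫ (S θ̄ x / Z'(θ̄)) · e'(x) dμ at θ̄. Then: (a) the map θ ↦ KL(p‖q_θ) := ∫ p x · log(p x / q_θ x) dμ has derivative at θ̄ equal to ∫ p x · e'(x) dμ − ∫ q_{θ̄}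 x · e'(x) dμ; and (b) this same number is the derivative at θ̄ of the frozen-second-term objective θ ↦ ∫ p x · E'_θ(x) dμ − ∫ q_{θ̄} x · E'_θ(x) dμ. -/

import Mathlib

open MeasureTheory

/-- gradient identity underlying Theorem 1 of the paper: for a
parametrized softmax family `h : ℝ → X → Fin (K+1) → ℝ` with
`S θ x = ∑_{i : Fin K} h θ x i.castSucc`, energy `E'_θ x = -log (S θ x)`,
partition function `Z' θ = ∫ S θ x dμ` (positive and finite near `θ̄`, finiteness
encoded as integrability of `S θ`), EBM density `q_θ x = S θ x / Z' θ`, and a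
probability density `p`, with pointwise derivatives `h'` at `θ̄`,
`S' x = ∑_{i : Fin K} h' x i.castSucc`, `e' x = -S' x / S θ̄ x`, and the stated
integrability and differentiation-under-the-integral hypotheses:
(a) `θ ↦ KL(p ‖ q_θ) = ∫ p x * log (p x / q_θ x) dμ` has derivative at `θ̄` equal to
`∫ p x * e' x dμ - ∫ q_{θ̄} x * e' x dμ`, and
(b) the same number is the derivative at `θ̄` of the frozen-second-term objective
`θ ↦ ∫ p x * E'_θ x dμ - ∫ q_{θ̄} x * E'_θ x dμ`. -/
theorem eow_softmax_kl_gradient_equals_frozen_objective_gradient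
    {X : Type*} [MeasurableSpace X] (μ : Measure X) [SigmaFinite μ]
    (K : ℕ) (hK : 1 ≤ K)
    (h : ℝ → X → Fin (K + 1) → ℝ)
    (hpos : ∀ θ x i, 0 < h θ x i)
    (hsum1 : ∀ θ x, ∑ i : Fin (K + 1), h θ x i = 1)
    (S : ℝ → X → ℝ) (hS : ∀ θ x, S θ x = ∑ i : Fin K, h θ x i.castSucc)
    (Z' : ℝ → ℝ) (hZ'def : ∀ θ, Z' θ = ∫ x, S θ x ∂μ)
    (p : X → ℝ) (hp0 : ∀ x, 0 ≤ p x) (hp1 : ∫ x, p x ∂μ = 1)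
    (θbar : ℝ) (h' : X → Fin (K + 1) → ℝ)
    -- (i) pointwise derivatives at θ̄
    (hderiv : ∀ x i, HasDerivAt (fun θ => h θ x i) (h' x i) θbar)
    (S' : X → ℝ) (hS' : ∀ x, S' x = ∑ i : Fin K, h' x i.castSucc)
    (e' : X → ℝ) (he' : ∀ x, e' x = -S' x / S θbar x)
    -- (ii) 0 < Z' θ < ∞ for θ near θ̄
    (hZ' : ∀ᶠ θ in nhds θbar, Integrable (fun x => S θ x) μ ∧ 0 < Z' θ)
    -- (iii) integrability hypotheses
    (hint1 : Integrable (fun x => p x * Real.log (p x)) μ)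
    (hint2 : ∀ᶠ θ in nhds θbar, Integrable (fun x => p x * Real.log (S θ x)) μ)
    (hint3 : Integrable S' μ)
    (hint4 : Integrable (fun x => p x * e' x) μ)
    (hint5 : Integrable (fun x => (S θbar x / Z' θbar) * e' x) μ)
    -- (iv) differentiation under the integral sign
    (hd1 : HasDerivAt Z' (∫ x, S' x ∂μ) θbar)
    (hd2 : HasDerivAt (fun θ => ∫ x, p x * (-Real.log (S θ x)) ∂μ)
      (∫ x, p x * e' x ∂μ) θbar)
    (hd3 : HasDerivAt (fun θ => ∫ x, (S θbar x / Z' θbar) * (-Real.log (S θ x)) ∂μ)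
      (∫ x, (S θbar x / Z' θbar) * e' x ∂μ) θbar) :
    HasDerivAt (fun θ => ∫ x, p x * Real.log (p x / (S θ x / Z' θ)) ∂μ)
      ((∫ x, p x * e' x ∂μ) - ∫ x, (S θbar x / Z' θbar) * e' x ∂μ) θbar ∧
    HasDerivAt
      (fun θ => (∫ x, p x * (-Real.log (S θ x)) ∂μ) -
        ∫ x, (S θbar x / Z' θbar) * (-Real.log (S θ x)) ∂μ)
      ((∫ x, p x * e' x ∂μ) - ∫ x, (S θbar x / Z' θbar) * e' x ∂μ) θbar := by

  -- basic positivity facts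
  have hFinK : Nonempty (Fin K) := ⟨⟨0, hK⟩⟩
  have hSpos : ∀ θ x, 0 < S θ x := by
    intro θ x
    rw [hS]
    exact Finset.sum_pos (fun i _ => hpos θ x i.castSucc) Finset.univ_nonempty
  have hZpos : 0 < Z' θbar := (hZ'.self_of_nhds).2
  have hp_int : Integrable p μ := by
    by_contra hc
    rw [integral_undef hc] at hp1
    norm_num at hp1
  -- key: ∫ qθ̄ e' = -(∫ S')/Z' θ̄
  have hkey : (∫ x, (S θbar x / Z' θbar) * e' x ∂μ) = -(∫ x, S' x ∂μ) / Z' θbar := by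
    have : ∀ x, (S θbar x / Z' θbar) * e' x = -(S' x) / Z' θbar := by
      intro x
      rw [he']
      have h1 := (hSpos θbar x).ne'
      have h2 := hZpos.ne'
      field_simp
    rw [integral_congr_ae (Filter.Eventually.of_forall this)]
    rw [integral_div, integral_neg]
  -- part (b)
  have hb : HasDerivAt
      (fun θ => (∫ x, p x * (-Real.log (S θ x)) ∂μ) -
        ∫ x, (S θbar x / Z' θbar) * (-Real.log (S θ x)) ∂μ)
      ((∫ x, p x * e' x ∂μ) - ∫ x, (S θbar x / Z' θbar) * e' x ∂μ) θbar :=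
    hd2.sub hd3
  refine ⟨?_, hb⟩
  -- part (a): KL(θ) =ᶠ C + ∫ p*(-log Sθ) + log (Z' θ)
  have hlogZ : HasDerivAt (fun θ => Real.log (Z' θ))
      ((∫ x, S' x ∂μ) / Z' θbar) θbar := hd1.log (ne_of_gt hZpos)
  have hsum : HasDerivAt
      (fun θ => (∫ x, p x * Real.log (p x) ∂μ) +
        (∫ x, p x * (-Real.log (S θ x)) ∂μ) + Real.log (Z' θ))
      ((∫ x, p x * e' x ∂μ) + (∫ x, S' x ∂μ) / Z' θbar) θbar := by
    have h0 := ((hasDerivAt_const θbar (∫ x, p x * Real.log (p x) ∂μ)).add hd2).add hlogZ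
    rw [zero_add] at h0
    exact h0
  have heq : (fun θ => ∫ x, p x * Real.log (p x / (S θ x / Z' θ)) ∂μ)
      =ᶠ[nhds θbar] (fun θ => (∫ x, p x * Real.log (p x) ∂μ) +
        (∫ x, p x * (-Real.log (S θ x)) ∂μ) + Real.log (Z' θ)) := by
    filter_upwards [hZ', hint2] with θ hθ hi2
    obtain ⟨hSi, hZθ⟩ := hθ
    have hpt : ∀ x, p x * Real.log (p x / (S θ x / Z' θ)) =
        p x * Real.log (p x) + p x * (-Real.log (S θ x)) + p x * Real.log (Z' θ) := by
      intro x
      rcases eq_or_lt_of_le (hp0 x) with hx | hx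
      · simp [← hx]
      · rw [Real.log_div (ne_of_gt hx) (ne_of_gt (div_pos (hSpos θ x) hZθ)),
          Real.log_div (ne_of_gt (hSpos θ x)) (ne_of_gt hZθ)]
        ring
    rw [integral_congr_ae (Filter.Eventually.of_forall hpt)]
    have i2' : Integrable (fun x => p x * -Real.log (S θ x)) μ :=
      hi2.neg.congr (Filter.Eventually.of_forall fun x => (mul_neg _ _).symm)
    have i12 : Integrable (fun x => p x * Real.log (p x) + p x * -Real.log (S θ x)) μ :=
      hint1.add i2'
    rw [integral_add i12 (hp_int.mul_const _),
      integral_add hint1 i2', integral_mul_const, hp1]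
    ring
  have := hsum.congr_of_eventuallyEq heq
  refine this.congr_deriv ?_
  rw [hkey]
  field_simp
  ring
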